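/- arXiv:1111.6710 — 8 statements merged into one kernel-verified Lean document; each statement's English description precedes it below -/
import Mathlib

section
/- Let k be a finite field with q elements and k̄ an algebraic closure of k. Let M be a finitely generated free abelian group and σ an automorphism of M. Then the set of group homomorphisms f : M → k̄ˣ satisfying f(σm) = f(m)^q for all m ∈ M is finite. (Equivalently, H^0(𝔴, Hom(M, k̄ˣ)) is finite, where the Weil group 𝔴 ≅ ℤ of k acts on Hom(M, k̄ˣ) through σ on M and Frobenius x ↦ x^q on k̄ˣ.) -/
/-- Let `k` be a finite field with `q` elements and `k̄` an algebraic closure of `k`.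
If `M` is a finitely generated free abelian group with an automorphism `σ`, then the set
of group homomorphisms `f : M → k̄ˣ` with `f (σ m) = f m ^ q` for all `m` is finite;
i.e. `H⁰(𝔴, Hom(M, k̄ˣ))` is finite. -/
theorem finite_weilFixed_hom_to_units (k : Type*) [Field k] [Fintype k]
    (q : ℕ) (hq : Fintype.card k = q)
    (M : Type*) [AddCommGroup M] [Module.Free ℤ M] [Module.Finite ℤ M]
    (σ : M ≃+ M) :
    {f : M →+ Additive (AlgebraicClosure k)ˣ |
      ∀ m : M, f (σ m) = q • f m}.Finite := by
  classical
  set K := AlgebraicClosure k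
  set σL : M →ₗ[ℤ] M := σ.toIntLinearEquiv.toLinearMap with hσL
  set P : Polynomial ℤ := σL.charpoly with hP
  set c : ℤ := P.eval (q : ℤ) with hcdef
  have hq2 : 2 ≤ q := by
    have := Fintype.one_lt_card (α := k)
    omega
  -- the constant coefficient of the charpoly is a unit
  have hcoeff : IsUnit (P.coeff 0) := by
    have hdet : IsUnit (LinearMap.det σL) := σ.toIntLinearEquiv.isUnit_det'
    rw [LinearMap.det_eq_sign_charpoly_coeff] at hdet
    exact isUnit_of_mul_isUnit_right hdet
  -- hence `c ≠ 0`
  have hc : c ≠ 0 := by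
    intro h
    have hdvd : (q : ℤ) ∣ P.coeff 0 := by
      have h2 := Polynomial.sub_dvd_eval_sub (q : ℤ) 0 P
      rw [sub_zero, ← hcdef, h, zero_sub, dvd_neg, Polynomial.coeff_zero_eq_eval_zero] at *
      exact h2
    have : IsUnit (q : ℤ) := isUnit_of_dvd_unit hdvd hcoeff
    rcases Int.isUnit_iff.mp this with h' | h' <;> omega
  -- each `f` in the set kills `c • m` for every `m`
  have hkill : ∀ f ∈ {f : M →+ Additive Kˣ | ∀ m : M, f (σ m) = q • f m},
      ∀ m : M, c • f m = 0 := by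
    intro f hf m
    have hpow : ∀ (n : ℕ) (m : M), f ((σL ^ n) m) = ((q : ℤ) ^ n) • f m := by
      intro n
      induction n with
      | zero => intro m; simp
      | succ n ih =>
        intro m
        have h1 : (σL ^ (n + 1)) m = (σL ^ n) (σ m) := by
          rw [pow_succ]
          rfl
        rw [h1, ih, hf m, ← natCast_zsmul (f m) q, smul_smul, pow_succ]
    have haeval : ∀ (Q : Polynomial ℤ) (m : M),
        f ((Polynomial.aeval σL Q) m) = (Q.eval (q : ℤ)) • f m := by
      intro Q
      induction Q using Polynomial.induction_on' with
      | add p r hp hr =>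
        intro m
        simp only [map_add, LinearMap.add_apply, Polynomial.eval_add, add_smul, hp, hr]
        rw [add_zsmul]
      | monomial n a =>
        intro m
        rw [Polynomial.aeval_monomial, Polynomial.eval_monomial]
        have : (algebraMap ℤ (Module.End ℤ M) a * σL ^ n) m = a • ((σL ^ n) m) := by
          simp [Module.algebraMap_end_apply]
        rw [this, map_zsmul, hpow n m, smul_smul]
    have h0 : (Polynomial.aeval σL P) m = 0 := by
      rw [hP, LinearMap.aeval_self_charpoly]
      rfl
    have := haeval P m
    rw [h0, map_zero] at this
    exact this.symm
  -- the `c`-torsion of `Additive Kˣ` is finite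
  set N : ℕ := c.natAbs with hN
  have hN0 : 0 < N := Int.natAbs_pos.mpr hc
  have hT : {x : Additive Kˣ | c • x = 0}.Finite := by
    have hpoly : (Polynomial.X ^ N - Polynomial.C 1 : Polynomial K) ≠ 0 :=
      Polynomial.X_pow_sub_C_ne_zero hN0 1
    have hroots : {y : K | (Polynomial.X ^ N - Polynomial.C 1 : Polynomial K).IsRoot y}.Finite :=
      Polynomial.finite_setOf_isRoot hpoly
    have hinj : Function.Injective (fun x : Additive Kˣ => ((Additive.toMul x : Kˣ) : K)) := by
      intro x y h
      exact Additive.toMul.injective (Units.ext h)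
    refine Set.Finite.subset (hroots.preimage hinj.injOn) ?_
    intro x hx
    have hx' : (Additive.toMul x : Kˣ) ^ c = 1 := hx
    have horder : (Additive.toMul x : Kˣ) ^ N = 1 := by
      rcases Int.natAbs_eq c with h | h
      · rw [← zpow_natCast, ← h, hx']
      · rw [← zpow_natCast]
        have : (Additive.toMul x : Kˣ) ^ (-c) = 1 := by rw [zpow_neg, hx', inv_one]
        rw [show ((N : ℤ)) = -c by omega, this]
    have : ((Additive.toMul x : Kˣ) : K) ^ N = 1 := by
      rw [← Units.val_pow_eq_pow_val, horder, Units.val_one]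
    simp only [Set.mem_preimage, Set.mem_setOf_eq, Polynomial.IsRoot.def, Polynomial.eval_sub,
      Polynomial.eval_pow, Polynomial.eval_X, Polynomial.eval_C, this, sub_self]
  -- conclude by mapping to functions on a basis
  set b := Module.Free.chooseBasis ℤ M with hb
  haveI : Finite ↥{x : Additive Kˣ | c • x = 0} := hT.to_subtype
  have : Finite ↥{f : M →+ Additive Kˣ | ∀ m : M, f (σ m) = q • f m} := by
    refine Finite.of_injective
      (fun f => fun i : Module.Free.ChooseBasisIndex ℤ M =>
        (⟨f.1 (b i), hkill f.1 f.2 (b i)⟩ : {x : Additive Kˣ | c • x = 0})) ?_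
    intro f g h
    ext m
    have hlin : f.1.toIntLinearMap = g.1.toIntLinearMap := by
      apply b.ext
      intro i
      have := congrFun h i
      simpa using congrArg Subtype.val this
    exact congrArg (fun x : Additive Kˣ => ((Additive.toMul x : Kˣ) : K))
      (congrArg (fun φ => φ m) (congrArg DFunLike.coe hlin))
  exact Set.toFinite _
end

section
/- Let k be a finite field with q elements and k̄ an algebraic closure of k. Let M be a finitely generated free abelian group and σ an automorphism of M. Then the set of additive group homomorphisms f : M → (k̄, +) satisfying f(σm) = f(m)^q for all m ∈ M is finite. (Equivalently, H^0(𝔴, Hom(M, k̄)) is finite, where the Weil group 𝔴 ≅ ℤ of k acts on Hom(M, k̄) through σ on M and Frobenius x ↦ x^q on k̄.) -/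
section Aux

/-- In a field of characteristic `p`, raising to a `p`-th power (hence to `q = p^m`) is
injective. -/
private lemma pow_q_injective {K : Type*} [Field K] (p : ℕ) [Fact p.Prime] [CharP K p]
    (n : ℕ) : Function.Injective (fun x : K => x ^ p ^ n) := by
  intro x y h
  have hs : (x - y) ^ p ^ n = 0 := by
    rw [sub_pow_char_pow]
    simpa using sub_eq_zero_of_eq h
  have := pow_eq_zero_iff (pow_ne_zero n (Nat.Prime.ne_zero Fact.out)) |>.mp hs
  exact sub_eq_zero.mp this

/-- Key uniform bound: if `f : M →+ K` satisfies `f (σ x) = f x ^ q`, then every value of `f`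
satisfies `y ^ q ^ N! = y`, where `N = p ^ (number of basis elements)`. -/
private lemma value_fixed {K : Type*} [Field K] (p q : ℕ) [Fact p.Prime] [CharP K p]
    (m : ℕ) (hqm : q = p ^ m)
    {ι : Type*} [Fintype ι] {M : Type*} [AddCommGroup M] (b : Module.Basis ι ℤ M)
    (σ : M ≃+ M) (f : M →+ K) (hf : ∀ x : M, f (σ x) = f x ^ q) (x : M) :
    f x ^ q ^ Nat.factorial (p ^ Fintype.card ι) = f x := by
  classical
  have hp : Nat.Prime p := Fact.out
  set N := p ^ Fintype.card ι with hN
  -- The image of `f` is contained in the set of `𝔽_p`-combinations of the `f (b i)`.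
  set T : Finset K :=
    Finset.image (fun c : ι → Fin p => ∑ i, ((c i : ℕ) : K) * f (b i)) Finset.univ with hT
  have hmemT : ∀ y : M, f y ∈ T := by
    intro y
    have hrepr : (∑ i, (b.repr y) i • b i) = y := b.sum_repr y
    have hfy : f y = ∑ i, ((b.repr y) i : ℤ) • f (b i) := by
      conv_lhs => rw [← hrepr]
      rw [map_sum]
      exact Finset.sum_congr rfl fun i _ => (f.toIntLinearMap.map_smul _ _)
    have hppos : (0 : ℤ) < (p : ℤ) := by exact_mod_cast hp.pos
    refine Finset.mem_image.mpr ⟨fun i => ⟨((b.repr y) i % (p : ℤ)).toNat, ?_⟩, Finset.mem_univ _, ?_⟩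
    · rw [Int.toNat_lt' hp.pos]
      exact Int.emod_lt_of_pos _ hppos
    · rw [hfy]
      refine (Finset.sum_congr rfl fun i _ => ?_).symm
      set z : ℤ := (b.repr y) i with hz
      have h0 : (0 : ℤ) ≤ z % (p : ℤ) := Int.emod_nonneg _ (by exact_mod_cast hp.ne_zero)
      have hcast : (((z % (p : ℤ)).toNat : ℕ) : K) = ((z % (p : ℤ) : ℤ) : K) := by
        rw [← Int.cast_natCast, Int.toNat_of_nonneg h0]
      rw [hcast, zsmul_eq_mul]
      congr 1
      have hed := Int.emod_add_mul_ediv z (p : ℤ)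
      calc ((z : ℤ) : K) = ((z % (p : ℤ) + (p : ℤ) * (z / (p : ℤ)) : ℤ) : K) := by rw [hed]
        _ = ((z % (p : ℤ) : ℤ) : K) := by
            push_cast
            rw [CharP.cast_eq_zero K p]
            ring
  have hTcard : T.card ≤ N := by
    calc T.card ≤ Finset.univ.card := Finset.card_image_le
      _ = Fintype.card (ι → Fin p) := Finset.card_univ
      _ = N := by rw [Fintype.card_fun, Fintype.card_fin]
  -- iterates of σ give q-power iterates of values
  have hiter : ∀ j : ℕ, f ((⇑σ)^[j] x) = f x ^ q ^ j := by
    intro j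
    induction j with
    | zero => simp
    | succ j ih =>
      rw [Function.iterate_succ_apply', hf, ih, ← pow_mul, ← pow_succ]
  -- pigeonhole
  have hmaps : ∀ j ∈ Finset.range (N + 1), f x ^ q ^ j ∈ T := by
    intro j _
    rw [← hiter j]
    exact hmemT _
  have hlt : T.card < (Finset.range (N + 1)).card := by
    rw [Finset.card_range]; omega
  obtain ⟨i, hi, j, hj, hij, heq⟩ :=
    Finset.exists_ne_map_eq_of_card_lt_of_maps_to hlt hmaps
  -- wlog i < j
  have key : ∃ e : ℕ, 0 < e ∧ e ≤ N ∧ f x ^ q ^ e = f x := by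
    rcases lt_or_gt_of_ne hij with h | h
    · refine ⟨j - i, by omega, by simp only [Finset.mem_range] at hj; omega, ?_⟩
      have hqi : q ^ i = p ^ (m * i) := by rw [hqm, ← pow_mul, Nat.mul_comm]
      have : (f x ^ q ^ (j - i)) ^ p ^ (m * i) = f x ^ p ^ (m * i) :=
        calc (f x ^ q ^ (j - i)) ^ p ^ (m * i) = f x ^ (q ^ (j - i) * q ^ i) := by
              rw [← hqi, ← pow_mul]
          _ = f x ^ q ^ j := by rw [← pow_add, Nat.sub_add_cancel (le_of_lt h)]
          _ = f x ^ q ^ i := heq.symm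
          _ = f x ^ p ^ (m * i) := by rw [hqi]
      exact pow_q_injective p (m * i) this
    · refine ⟨i - j, by omega, by simp only [Finset.mem_range] at hi; omega, ?_⟩
      have hqj : q ^ j = p ^ (m * j) := by rw [hqm, ← pow_mul, Nat.mul_comm]
      have : (f x ^ q ^ (i - j)) ^ p ^ (m * j) = f x ^ p ^ (m * j) :=
        calc (f x ^ q ^ (i - j)) ^ p ^ (m * j) = f x ^ (q ^ (i - j) * q ^ j) := by
              rw [← hqj, ← pow_mul]
          _ = f x ^ q ^ i := by rw [← pow_add, Nat.sub_add_cancel (le_of_lt h)]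
          _ = f x ^ q ^ j := heq
          _ = f x ^ p ^ (m * j) := by rw [hqj]
      exact pow_q_injective p (m * j) this
  obtain ⟨e, he0, heN, he⟩ := key
  obtain ⟨t, ht⟩ := Nat.dvd_factorial he0 heN
  rw [ht]
  clear ht
  induction t with
  | zero => simp
  | succ t ih =>
    rw [Nat.mul_succ, pow_add, pow_mul]
    rw [pow_mul] at ih ⊢
    rw [ih]
    exact he

end Aux

/-- Let `k` be a finite field with `q` elements and `k̄` an algebraic closure of `k`.
If `M` is a finitely generated free abelian group with an automorphism `σ`, then the set
of additive group homomorphisms `f : M → (k̄, +)` with `f (σ m) = (f m) ^ q` for all `m`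
is finite; i.e. `H⁰(𝔴, Hom(M, k̄))` is finite. -/
theorem finite_weilFixed_hom_to_additive (k : Type*) [Field k] [Fintype k]
    (q : ℕ) (hq : Fintype.card k = q)
    (M : Type*) [AddCommGroup M] [Module.Free ℤ M] [Module.Finite ℤ M]
    (σ : M ≃+ M) :
    {f : M →+ AlgebraicClosure k | ∀ m : M, f (σ m) = (f m) ^ q}.Finite := by
  classical
  set K := AlgebraicClosure k
  obtain ⟨p, hcp⟩ := CharP.exists k
  haveI : CharP k p := hcp
  obtain ⟨m, hp, hcard⟩ := FiniteField.card k p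
  haveI : Fact p.Prime := ⟨hp⟩
  haveI : CharP K p := charP_of_injective_algebraMap (algebraMap k K).injective p
  have hqm : q = p ^ (m : ℕ) := by rw [← hq, hcard]
  have hq2 : 2 ≤ q := by rw [← hq]; exact Fintype.one_lt_card
  set ι := Module.Free.ChooseBasisIndex ℤ M
  set b : Module.Basis ι ℤ M := Module.Free.chooseBasis ℤ M
  set N := p ^ Fintype.card ι with hN
  set Q := q ^ Nat.factorial N with hQ
  have hQ2 : 2 ≤ Q := by
    calc 2 ≤ q := hq2
      _ = q ^ 1 := (pow_one q).symm
      _ ≤ Q := Nat.pow_le_pow_right (le_trans one_le_two hq2)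
        (Nat.one_le_iff_ne_zero.mpr (Nat.factorial_ne_zero N))
  -- the finite set of possible values
  set R : Set K := {x : K | x ^ Q = x} with hR
  have hRfin : R.Finite := by
    have hQ1 : Q ≠ 1 := by
      intro h
      rw [h] at hQ2
      exact absurd hQ2 (by norm_num)
    have h1Q : ¬ (1 : ℕ) = Q := fun h => hQ1 h.symm
    have hPne : (Polynomial.X ^ Q - Polynomial.X : Polynomial K) ≠ 0 := by
      intro hzero
      have h1 : (Polynomial.X ^ Q - Polynomial.X : Polynomial K).coeff Q = 1 := by
        simp [Polynomial.coeff_X_pow, Polynomial.coeff_X, hQ1, h1Q]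
      rw [hzero] at h1
      simp at h1
    refine Set.Finite.subset (Polynomial.finite_setOf_isRoot hPne) ?_
    intro x hx
    simp only [Set.mem_setOf_eq, Polynomial.IsRoot, Polynomial.eval_sub,
      Polynomial.eval_pow, Polynomial.eval_X]
    rw [hx]
    ring
  haveI : Finite ↥R := hRfin.to_subtype
  haveI : Finite (ι → ↥R) := Pi.finite
  -- inject the set into `ι → R`
  set S := {f : M →+ K | ∀ m : M, f (σ m) = (f m) ^ q} with hS
  have hval : ∀ f ∈ S, ∀ x : M, f x ∈ R := by
    intro f hf x
    exact value_fixed p q (m : ℕ) hqm b σ f hf x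
  haveI : Finite ↥S := by
    refine Finite.of_injective (fun f : ↥S => fun i : ι => (⟨(f : M →+ K) (b i),
      hval f f.2 (b i)⟩ : ↥R)) ?_
    intro f g hfg
    have hbase : ∀ i : ι, (f : M →+ K).toIntLinearMap (b i) = (g : M →+ K).toIntLinearMap (b i) := by
      intro i
      exact Subtype.ext_iff.mp (congrFun hfg i)
    have hlin := b.ext hbase
    have hFG : (f : M →+ K) = (g : M →+ K) := by
      ext x
      exact LinearMap.congr_fun hlin x
    exact Subtype.ext hFG
  exact Set.toFinite S
end

section
/- Let k be a finite field with q elements and k̄ an algebraic closure of k. Let M be a finitely generated free abelian group and σ an automorphism of M. Then for every group homomorphism h : M → k̄ˣ there exists a group homomorphism f : M → k̄ˣ such that h(m) = f(m)^q · f(σm)⁻¹ for all m ∈ M. (Equivalently, H^1(𝔴, Hom(M, k̄ˣ)) = 0, where the Weil group 𝔴 ≅ ℤ of k acts on Hom(M, k̄ˣ) through σ on M and Frobenius x ↦ x^q on k̄ˣ.) -/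
/-- The additive group of units of an algebraically closed field is divisible. -/
noncomputable def divisibleAdditiveUnits (K : Type*) [Field K] [IsAlgClosed K] :
    DivisibleBy (Additive Kˣ) ℤ := by
  have hroot : RootableBy Kˣ ℕ := by
    refine rootableByOfPowLeftSurj _ _ (fun {n} hn x => ?_)
    obtain ⟨z, hz⟩ := IsAlgClosed.exists_pow_nat_eq (x : K) (Nat.pos_of_ne_zero hn)
    have hz0 : z ≠ 0 := by
      rintro rfl
      rw [zero_pow hn] at hz
      exact x.ne_zero hz.symm
    exact ⟨Units.mk0 z hz0, Units.ext (by simpa using hz)⟩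
  have hnat : DivisibleBy (Additive Kˣ) ℕ :=
    { div := fun a n => Additive.ofMul (RootableBy.root a.toMul n)
      div_zero := fun a => congrArg Additive.ofMul (RootableBy.root_zero _)
      div_cancel := fun {n} a hn =>
        congrArg Additive.ofMul (RootableBy.root_cancel (α := ℕ) a.toMul hn) }
  exact @AddGroup.divisibleByIntOfDivisibleByNat _ _ hnat

lemma iter_div (q : ℕ) (M : Type*) [AddCommGroup M] (σ : M ≃+ M) (m : M)
    (hm : σ m = q • m) : ∀ j : ℕ, ∃ m', σ m' = q • m' ∧ m = q ^ j • m' := by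
  intro j
  induction j with
  | zero => exact ⟨m, hm, by simp⟩
  | succ j ih =>
    obtain ⟨m', h1, h2⟩ := ih
    have key : m' = q • σ.symm m' := by
      calc m' = σ.symm (σ m') := (σ.symm_apply_apply m').symm
        _ = q • σ.symm m' := by rw [h1, map_nsmul]
    refine ⟨σ.symm m', ?_, ?_⟩
    · rw [σ.apply_symm_apply]
      exact key
    · calc m = q ^ j • m' := h2
        _ = q ^ j • (q • σ.symm m') := by rw [← key]
        _ = q ^ (j + 1) • σ.symm m' := by rw [pow_succ, mul_smul]

/-- Let `k` be a finite field with `q` elements and `k̄` an algebraic closure of `k`.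
If `M` is a finitely generated free abelian group with an automorphism `σ`, then every
group homomorphism `h : M → k̄ˣ` is of the form `h m = f m ^ q * (f (σ m))⁻¹` for some
group homomorphism `f : M → k̄ˣ` (written additively below);
i.e. `H¹(𝔴, Hom(M, k̄ˣ)) = 0`. -/
theorem h1_vanish_hom_to_units (k : Type*) [Field k] [Fintype k]
    (q : ℕ) (hq : Fintype.card k = q)
    (M : Type*) [AddCommGroup M] [Module.Free ℤ M] [Module.Finite ℤ M]
    (σ : M ≃+ M) (h : M →+ Additive (AlgebraicClosure k)ˣ) :
    ∃ f : M →+ Additive (AlgebraicClosure k)ˣ,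
      ∀ m : M, h m = q • f m - f (σ m) := by
  classical
  letI : DivisibleBy (Additive (AlgebraicClosure k)ˣ) ℤ :=
    divisibleAdditiveUnits (AlgebraicClosure k)
  have hq2 : 1 < q := hq ▸ Fintype.one_lt_card
  set T : M →+ M := q • AddMonoidHom.id M - σ.toAddMonoidHom with hT
  have hTm : ∀ m, T m = q • m - σ m := fun m => rfl
  have hinj : Function.Injective T := by
    rw [injective_iff_map_eq_zero]
    intro m hm0
    rw [hTm, sub_eq_zero] at hm0
    have hσ : σ m = q • m := hm0.symm
    let b := Module.Free.chooseBasis ℤ M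
    have hcoord : ∀ i, b.repr m i = 0 := by
      intro i
      by_contra ha
      have hdvd : ∀ j : ℕ, ((q : ℤ)) ^ j ∣ b.repr m i := by
        intro j
        obtain ⟨m', -, hm'⟩ := iter_div q M σ m hσ j
        exact ⟨b.repr m' i, by
          rw [hm', map_nsmul, Finsupp.smul_apply, nsmul_eq_mul, Nat.cast_pow]⟩
      have hle : ((q : ℤ)) ^ (b.repr m i).natAbs ≤ |b.repr m i| :=
        Int.le_of_dvd (abs_pos.mpr ha) ((dvd_abs _ _).mpr (hdvd _))
      rw [Int.abs_eq_natAbs] at hle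
      have hfin : q ^ (b.repr m i).natAbs ≤ (b.repr m i).natAbs := by exact_mod_cast hle
      exact absurd hfin (not_le.mpr (Nat.lt_pow_self hq2))
    have : b.repr m = 0 := Finsupp.ext hcoord
    exact b.repr.map_eq_zero_iff.mp this
  obtain ⟨f, hf⟩ := (Module.Baer.of_divisible _).extension_property_addMonoidHom T hinj h
  refine ⟨f, fun m => ?_⟩
  have := DFunLike.congr_fun hf m
  rw [AddMonoidHom.comp_apply, hTm, map_sub, map_nsmul] at this
  exact this.symm
end

section
/- Let k be a finite field with q elements and k̄ an algebraic closure of k. Let M be a finitely generated free abelian group and σ an automorphism of M. Then for every additive group homomorphism h : M → (k̄, +) there exists an additive group homomorphism f : M → (k̄, +) such that h(m) = f(m)^q − f(σm) for all m ∈ M. (Equivalently, H^1(𝔴, Hom(M, k̄)) = 0, where the Weil group 𝔴 ≅ ℤ of k acts on Hom(M, k̄) through σ on M and Frobenius x ↦ x^q on k̄.) -/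
/-- Let `k` be a finite field with `q` elements and `k̄` an algebraic closure of `k`.
If `M` is a finitely generated free abelian group with an automorphism `σ`, then every
additive group homomorphism `h : M → (k̄, +)` is of the form `h m = (f m) ^ q - f (σ m)`
for some additive group homomorphism `f : M → (k̄, +)`;
i.e. `H¹(𝔴, Hom(M, k̄)) = 0`. -/
theorem h1_vanish_hom_to_additive (k : Type*) [Field k] [Fintype k]
    (q : ℕ) (hq : Fintype.card k = q)
    (M : Type*) [AddCommGroup M] [Module.Free ℤ M] [Module.Finite ℤ M]
    (σ : M ≃+ M) (h : M →+ AlgebraicClosure k) :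
    ∃ f : M →+ AlgebraicClosure k,
      ∀ m : M, h m = (f m) ^ q - f (σ m) := by
  classical
  set K := AlgebraicClosure k with hK
  set p := ringChar k with hp0
  obtain ⟨n, hp, hcard⟩ := FiniteField.card k p
  haveI : Fact p.Prime := ⟨hp⟩
  haveI : CharP K p := charP_of_injective_algebraMap (algebraMap k K).injective p
  haveI : ExpChar K p := .prime hp
  haveI : NeZero p := ⟨hp.pos.ne'⟩
  have hq2 : 1 < q := hq ▸ Fintype.one_lt_card
  have hqpn : q = p ^ (n : ℕ) := hq ▸ hcard
  -- choose a basis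
  set ι := Module.Free.ChooseBasisIndex ℤ M with hι
  set b : Module.Basis ι ℤ M := Module.Free.chooseBasis ℤ M with hb
  -- σ as an integer-linear endomorphism
  set S : M →ₗ[ℤ] M := σ.toAddMonoidHom.toIntLinearMap with hSdef
  have hS : ∀ m, S m = σ m := fun _ => rfl
  set T := LinearMap.toMatrixAlgEquiv b with hT
  set Cm : Matrix ι ι ℤ →+* Matrix ι ι (ZMod p) := (Int.castRingHom (ZMod p)).mapMatrix
    with hCm
  have hSunit : IsUnit S := by
    refine ⟨⟨S, σ.symm.toAddMonoidHom.toIntLinearMap, ?_, ?_⟩, rfl⟩ <;>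
      · ext m
        simp [hSdef, Module.End.mul_apply]
  have hBunit : IsUnit (Cm (T S)) := ((hSunit.map T).map Cm)
  set Bu := hBunit.unit with hBu
  set u := orderOf Bu with hudef
  have hu1 : 0 < u := orderOf_pos Bu
  have hBpow : Cm (T (S ^ u)) = 1 := by
    have h1 : Bu ^ u = 1 := pow_orderOf_eq_one Bu
    have h2 : (Cm (T S)) ^ u = 1 := by
      have := congrArg Units.val h1
      rwa [Units.val_pow_eq_pow_val, IsUnit.unit_spec, Units.val_one] at this
    rw [← map_pow, ← map_pow] at h2
    exact h2
  have hdvd : ∀ i j : ι, (p : ℤ) ∣ (T (S ^ u) i j - if i = j then 1 else 0) := by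
    intro i j
    have h2 : ((T (S ^ u) i j : ℤ) : ZMod p) = (1 : Matrix ι ι (ZMod p)) i j := by
      rw [← hBpow]; rfl
    rw [Matrix.one_apply] at h2
    apply (ZMod.intCast_zmod_eq_zero_iff_dvd _ p).mp
    push_cast
    rw [h2]
    split_ifs <;> simp
  -- any additive map to K is fixed by composition with S ^ u
  have hfix : ∀ (g : M →+ K) (m : M), g ((S ^ u) m) = g m := by
    intro g m
    have key : (g.toIntLinearMap.comp (S ^ u)) = g.toIntLinearMap := by
      apply Module.Basis.ext b
      intro i
      have hrep : (S ^ u) (b i) = ∑ j, (T (S ^ u) j i) • b j := by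
        conv_lhs => rw [← Module.Basis.sum_repr b ((S ^ u) (b i))]
        refine Finset.sum_congr rfl fun j _ => ?_
        rw [hT, LinearMap.toMatrixAlgEquiv_apply]
      simp only [LinearMap.comp_apply, AddMonoidHom.coe_toIntLinearMap]
      rw [hrep, map_sum]
      have hterm : ∀ j : ι, (T (S ^ u) j i) • g (b j)
          = (if j = i then (1 : ℤ) else 0) • g (b j) := by
        intro j
        have hzero : ((T (S ^ u) j i) - (if j = i then (1 : ℤ) else 0)) • g (b j) = 0 := by
          obtain ⟨d, hd⟩ := hdvd j i
          rw [hd, zsmul_eq_mul]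
          push_cast
          rw [CharP.cast_eq_zero K p]
          ring
        have := sub_smul (T (S ^ u) j i) (if j = i then (1 : ℤ) else 0) (g (b j))
        rw [hzero] at this
        linear_combination -this
      calc (∑ j, g ((T (S ^ u) j i) • b j))
          = ∑ j, (T (S ^ u) j i) • g (b j) := by
            refine Finset.sum_congr rfl fun j _ => ?_
            exact g.map_zsmul _ _
        _ = ∑ j, (if j = i then (1 : ℤ) else 0) • g (b j) :=
            Finset.sum_congr rfl fun j _ => hterm j
        _ = ∑ j, (if j = i then g (b j) else 0) := by
            refine Finset.sum_congr rfl fun j _ => ?_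
            split_ifs <;> simp
        _ = g (b i) := by rw [Finset.sum_ite_eq' Finset.univ i (fun j => g (b j))]; simp
    exact LinearMap.congr_fun key m
  -- roots of Artin–Schreier-type polynomials
  set Q := q ^ u with hQdef
  have hQ : 1 < Q := Nat.one_lt_pow hu1.ne' hq2
  have hQp : Q = p ^ ((n : ℕ) * u) := by rw [hQdef, hqpn, ← pow_mul]
  have hroot : ∀ i : ι, ∃ z : K, z ^ Q - z = h (b i) := by
    intro i
    have hdeg : (Polynomial.X ^ Q - Polynomial.X - Polynomial.C (h (b i))).degree = (Q : WithBot ℕ) := by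
      have h1 : (Polynomial.X + Polynomial.C (h (b i))).degree
          < ((Polynomial.X : Polynomial K) ^ Q).degree := by
        rw [Polynomial.degree_X_pow, Polynomial.degree_X_add_C]
        exact_mod_cast hQ
      rw [sub_sub, Polynomial.degree_sub_eq_left_of_degree_lt h1, Polynomial.degree_X_pow]
    obtain ⟨z, hz⟩ := IsAlgClosed.exists_root
      (Polynomial.X ^ Q - Polynomial.X - Polynomial.C (h (b i)))
      (by rw [hdeg]; exact_mod_cast (by omega : Q ≠ 0))
    refine ⟨z, ?_⟩
    have : z ^ Q - z - h (b i) = 0 := by simpa using hz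
    linear_combination this
  choose x0 hx0 using hroot
  set f0 : M →ₗ[ℤ] K := b.constr ℤ x0 with hf0def
  have hf0b : ∀ i, f0 (b i) = x0 i := fun i => b.constr_basis ℤ x0 i
  have key0 : ∀ m : M, (f0 m) ^ Q - f0 m = h m := by
    intro m
    have key : ((iterateFrobenius K p ((n : ℕ) * u)).toAddMonoidHom.toIntLinearMap.comp f0
        - f0) = h.toIntLinearMap := by
      apply Module.Basis.ext b
      intro i
      simp only [LinearMap.sub_apply, LinearMap.comp_apply,
        AddMonoidHom.coe_toIntLinearMap, RingHom.toAddMonoidHom_eq_coe,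
        AddMonoidHom.coe_coe, hf0b]
      rw [iterateFrobenius_def, ← hQp]
      exact hx0 i
    have h2 := LinearMap.congr_fun key m
    simp only [LinearMap.sub_apply, LinearMap.comp_apply,
      AddMonoidHom.coe_toIntLinearMap, RingHom.toAddMonoidHom_eq_coe,
      AddMonoidHom.coe_coe] at h2
    rw [iterateFrobenius_def, ← hQp] at h2
    exact h2
  -- the solution
  set f : M →+ K := ∑ j ∈ Finset.range u,
      ((iterateFrobenius K p ((u - 1 - j) * (n : ℕ))).toAddMonoidHom.comp
        ((LinearMap.toAddMonoidHom f0).comp (LinearMap.toAddMonoidHom (S ^ j)))) with hfdef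
  have hfapp : ∀ m : M, f m
      = ∑ j ∈ Finset.range u, (f0 ((S ^ j) m)) ^ p ^ ((u - 1 - j) * (n : ℕ)) := by
    intro m
    rw [hfdef, AddMonoidHom.finset_sum_apply]
    refine Finset.sum_congr rfl fun j _ => ?_
    simp only [AddMonoidHom.coe_comp, Function.comp_apply, RingHom.toAddMonoidHom_eq_coe,
      AddMonoidHom.coe_coe, LinearMap.toAddMonoidHom_coe]
    rw [iterateFrobenius_def]
  refine ⟨f, fun m => ?_⟩
  set G : ℕ → K := fun j => f0 ((S ^ j) m) ^ p ^ ((u - j) * (n : ℕ)) with hG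
  have hfm : f m ^ q = ∑ j ∈ Finset.range u, G j := by
    rw [hfapp, hqpn, ← iterateFrobenius_def, map_sum]
    refine Finset.sum_congr rfl fun j hj => ?_
    rw [Finset.mem_range] at hj
    rw [iterateFrobenius_def, ← pow_mul, ← pow_add, hG]
    have he : (u - 1 - j) * (n : ℕ) + (n : ℕ) = (u - j) * (n : ℕ) := by
      have h1 : u - 1 - j + 1 = u - j := by omega
      rw [← h1]; ring
    rw [he]
  have hfσ : f (σ m) = ∑ j ∈ Finset.range u, G (j + 1) := by
    rw [hfapp]
    refine Finset.sum_congr rfl fun j hj => ?_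
    have h1 : (S ^ j) (σ m) = (S ^ (j + 1)) m := by
      rw [pow_succ, Module.End.mul_apply, hS]
    have h2 : u - 1 - j = u - (j + 1) := by omega
    rw [h1, h2, hG]
  rw [hfm, hfσ, ← Finset.sum_sub_distrib, Finset.sum_range_sub' G u]
  have hG0 : G 0 = f0 m ^ Q := by
    rw [hG]
    simp only [pow_zero, Module.End.one_apply, Nat.sub_zero]
    rw [hQp, Nat.mul_comm]
  have hGu : G u = f0 m := by
    rw [hG]
    simp only [Nat.sub_self, Nat.zero_mul, pow_zero, pow_one]
    exact hfix f0.toAddMonoidHom m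
  rw [hG0, hGu, key0 m]
end

section
/- Let M be a finitely generated free abelian group, A an automorphism of M, and q an integer with |q| ≥ 2. Then the endomorphism of the quotient group (M ⊗_ℤ ℚ)/M induced by the map x ↦ (A ⊗ 1)(x) − q·x on M ⊗_ℤ ℚ is surjective. -/
/-- Let `M` be a finitely generated free abelian group, `A` an automorphism of `M`, and `q`
an integer with `|q| ≥ 2`.  The endomorphism of `(M ⊗_ℤ ℚ)/M` induced by
`x ↦ (A ⊗ 1) x − q • x` is surjective: for every `y ∈ M ⊗_ℤ ℚ` there is `x ∈ M ⊗_ℤ ℚ`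
with `(A ⊗ 1) x − q • x − y ∈ M` (where `M` sits inside `M ⊗_ℤ ℚ` via `m ↦ m ⊗ 1`). -/
theorem surjective_induced_on_rationalization_quotient
    (M : Type*) [AddCommGroup M] [Module.Free ℤ M] [Module.Finite ℤ M]
    (A : M ≃+ M) (q : ℤ) (hq : 2 ≤ |q|) :
    ∀ y : TensorProduct ℤ M ℚ, ∃ x : TensorProduct ℤ M ℚ,
      (LinearMap.rTensor ℚ A.toAddMonoidHom.toIntLinearMap) x - q • x - y ∈
        LinearMap.range ((TensorProduct.mk ℤ M ℚ).flip 1) := by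
  intro y
  set C : M →ₗ[ℤ] M := A.toAddMonoidHom.toIntLinearMap - q • LinearMap.id with hCdef
  -- key divisibility lemma
  have key : ∀ k : ℕ, ∀ m : M, A m = q • m → ∃ m', m = q ^ k • m' ∧ A m' = q • m' := by
    intro k
    induction k with
    | zero => intro m hm; exact ⟨m, by simp, hm⟩
    | succ k ih =>
      intro m hm
      obtain ⟨m', rfl, hm'⟩ := ih m hm
      refine ⟨A.symm m', ?_, ?_⟩
      · have : m' = q • A.symm m' := by
          conv_lhs => rw [← A.symm_apply_apply m', hm', map_zsmul]
        rw [pow_succ]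
        calc q ^ k • m' = q ^ k • (q • A.symm m') := by rw [← this]
        _ = (q ^ k * q) • A.symm m' := by rw [smul_smul]
      · have h1 : A (A.symm m') = m' := A.apply_symm_apply m'
        have h2 : m' = q • A.symm m' := by
          conv_lhs => rw [← A.symm_apply_apply m', hm', map_zsmul]
        rw [h1, ← h2]
  have hinj : Function.Injective C := by
    rw [injective_iff_map_eq_zero]
    intro m hm
    have hAm : A m = q • m := by
      have : A.toAddMonoidHom.toIntLinearMap m - q • m = 0 := by
        simpa [hCdef, sub_eq_zero] using hm
      simpa [sub_eq_zero] using this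
    by_contra hm0
    obtain ⟨b⟩ := Module.Free.exists_basis (R := ℤ) (M := M)
    obtain ⟨ι, b⟩ := b
    obtain ⟨i, hi⟩ : ∃ i, b.repr m i ≠ 0 := by
      by_contra h
      push_neg at h
      exact hm0 (b.repr.map_eq_zero_iff.mp (Finsupp.ext h))
    set c : ℤ := b.repr m i with hc
    have hdvd : ∀ k : ℕ, q ^ k ∣ c := by
      intro k
      obtain ⟨m', hm', -⟩ := key k m hAm
      refine ⟨b.repr m' i, ?_⟩
      rw [hc, hm', map_zsmul]
      simp
    have habs : ∀ k : ℕ, (2:ℤ) ^ k ≤ |c| := by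
      intro k
      calc (2:ℤ) ^ k ≤ |q| ^ k := pow_le_pow_left₀ (by norm_num) hq k
      _ = |q ^ k| := (abs_pow q k).symm
      _ ≤ |c| := Int.le_of_dvd (abs_pos.mpr hi) ((abs_dvd _ _).mpr ((dvd_abs _ _).mpr (hdvd k)))
    have h1 := habs c.natAbs
    have h2 : (c.natAbs : ℤ) < 2 ^ c.natAbs := by exact_mod_cast Nat.lt_two_pow_self (n := c.natAbs)
    rw [Int.abs_eq_natAbs] at h1
    omega
  -- matrix / adjugate
  classical
  let b := Module.Free.chooseBasis ℤ M
  set Cm := LinearMap.toMatrix b b C with hCm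
  have hd : Cm.det ≠ 0 := by
    intro h
    obtain ⟨v, hv, hv0⟩ := Matrix.exists_mulVec_eq_zero_iff.mpr h
    set m := b.repr.symm (Finsupp.equivFunOnFinite.symm v) with hmv
    have hrepr : ((b.repr m : _ →₀ ℤ) : _ → ℤ) = v := by
      rw [hmv, LinearEquiv.apply_symm_apply]
      exact funext fun j => rfl
    have hCm0 : C m = 0 := by
      have h2 := LinearMap.toMatrix_mulVec_repr b b C m
      rw [hrepr, hv0] at h2
      have h3 : ∀ j, b.repr (C m) j = 0 := fun j => (congrFun h2 j).symm
      exact b.repr.map_eq_zero_iff.mp (Finsupp.ext h3)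
    have hm0 : m = 0 := hinj (by simpa using hCm0)
    apply hv
    rw [← hrepr, hm0]
    simp
  set D : M →ₗ[ℤ] M := Matrix.toLin b b Cm.adjugate with hD
  have hCD : ∀ m : M, C (D m) = Cm.det • m := by
    intro m
    have h1 : C ∘ₗ D = Matrix.toLin b b (Cm * Cm.adjugate) := by
      rw [Matrix.toLin_mul b b b, hD, hCm, Matrix.toLin_toMatrix]
    have h2 : Cm * Cm.adjugate = Cm.det • 1 := Matrix.mul_adjugate Cm
    have h3 := LinearMap.congr_fun h1 m
    simp only [LinearMap.coe_comp, Function.comp_apply] at h3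
    rw [h3, h2]
    simp only [map_smul, Matrix.toLin_one, LinearMap.smul_apply, LinearMap.id_apply]
  -- surjectivity of rTensor C
  have hsur : ∃ x, LinearMap.rTensor ℚ C x = y := by
    induction y using TensorProduct.induction_on with
    | zero => exact ⟨0, map_zero _⟩
    | tmul m r =>
      refine ⟨D m ⊗ₜ ((Cm.det : ℚ)⁻¹ * r), ?_⟩
      rw [LinearMap.rTensor_tmul, hCD, TensorProduct.smul_tmul]
      congr 1
      have hdq : (Cm.det : ℚ) ≠ 0 := Int.cast_ne_zero.mpr hd
      rw [zsmul_eq_mul]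
      field_simp
    | add x₁ x₂ h1 h2 =>
      obtain ⟨a, ha⟩ := h1
      obtain ⟨a', ha'⟩ := h2
      exact ⟨a + a', by rw [map_add, ha, ha']⟩
  obtain ⟨x, hx⟩ := hsur
  refine ⟨x, ?_⟩
  have hsplit : LinearMap.rTensor ℚ A.toAddMonoidHom.toIntLinearMap x - q • x
      = LinearMap.rTensor ℚ C x := by
    rw [hCdef, LinearMap.rTensor_sub, LinearMap.rTensor_smul, LinearMap.rTensor_id]
    simp
  rw [hsplit, hx, sub_self]
  exact zero_mem _
end

section
/- Let p be a prime. Every additive group homomorphism from the group ℤ_p of p-adic integers to the group ℤ of integers is zero; that is, Hom_ℤ(ℤ_p, ℤ) = 0. -/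
/-- Every additive group homomorphism from the p-adic integers to ℤ is zero. -/
theorem hom_padicInt_to_int_eq_zero (p : ℕ) [Fact p.Prime] (f : ℤ_[p] →+ ℤ) :
    f = 0 := by
  ext x
  simp only [AddMonoidHom.zero_apply]
  obtain ⟨q, hq, hqp⟩ := Nat.exists_infinite_primes ((f x).natAbs + p + 1)
  have hpq : ¬ ((p : ℤ) ∣ (q : ℤ)) := by
    rw [Int.natCast_dvd_natCast]
    intro h
    rcases (hqp.eq_one_or_self_of_dvd p h) with h1 | h1
    · exact (Fact.out : p.Prime).one_lt.ne' h1
    · omega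
  have hu : IsUnit (q : ℤ_[p]) := by
    rw [PadicInt.isUnit_iff]
    refine le_antisymm (PadicInt.norm_le_one _) (not_lt.1 ?_)
    rw [show ((q : ℤ_[p])) = ((q : ℤ) : ℤ_[p]) by push_cast; ring,
      PadicInt.norm_int_lt_one_iff_dvd]
    exact hpq
  obtain ⟨u, huq⟩ := hu
  have hx : x = q • ((↑u⁻¹ : ℤ_[p]) * x) := by
    rw [nsmul_eq_mul, ← huq, ← mul_assoc]
    simp
  have hdvd : (q : ℤ) ∣ f x := by
    rw [hx, map_nsmul, nsmul_eq_mul]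
    exact Dvd.intro _ rfl
  have habs : |f x| < (q : ℤ) := by
    rw [Int.abs_eq_natAbs]
    exact_mod_cast by omega
  exact Int.eq_zero_of_abs_lt_dvd hdvd habs
end

section
/- Let p be a prime and K a finite field extension of ℚ_p, with ring of integers O_K (the integral closure of ℤ_p in K), and let U_K = O_Kˣ be the group of units of O_K. Then every group homomorphism from U_K to the additive group ℤ of integers is trivial; that is, Hom_ℤ(U_K, ℤ) = 0. -/
set_option linter.unusedSectionVars false
set_option maxHeartbeats 1000000

open Module Polynomial

section aux
variable {R : Type*} [CommRing R]

theorem mem_span_pow_smul_top_iff (a : R) (n : ℕ) (x : R) :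
    x ∈ ((Ideal.span {a}) ^ n • ⊤ : Submodule R R) ↔ a ^ n ∣ x := by
  rw [smul_eq_mul, Ideal.mul_top, Ideal.span_singleton_pow, Ideal.mem_span_singleton]

theorem smod_span_iff (a : R) (n : ℕ) (x y : R) :
    x ≡ y [SMOD ((Ideal.span {a}) ^ n • ⊤ : Submodule R R)] ↔ a ^ n ∣ x - y := by
  rw [SModEq.sub_mem, mem_span_pow_smul_top_iff]
end aux

section zp
variable {p : ℕ} [Fact p.Prime]

theorem zp_haus (c : ℤ_[p]) (h : ∀ n : ℕ, (p : ℤ_[p]) ^ n ∣ c) : c = 0 := by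
  have H : IsHausdorff (IsLocalRing.maximalIdeal ℤ_[p]) ℤ_[p] := inferInstance
  refine H.haus c fun n => ?_
  rw [PadicInt.maximalIdeal_eq_span_p, smod_span_iff, sub_zero]
  exact h n

theorem zp_prec (g : ℕ → ℤ_[p]) (h : ∀ {m n : ℕ}, m ≤ n → (p : ℤ_[p]) ^ m ∣ g m - g n) :
    ∃ L : ℤ_[p], ∀ n, (p : ℤ_[p]) ^ n ∣ g n - L := by
  have H : IsPrecomplete (IsLocalRing.maximalIdeal ℤ_[p]) ℤ_[p] := inferInstance
  obtain ⟨L, hL⟩ := H.prec (f := g) (by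
    intro m n hmn
    rw [PadicInt.maximalIdeal_eq_span_p, smod_span_iff]
    exact h hmn)
  refine ⟨L, fun n => ?_⟩
  have := hL n
  rwa [PadicInt.maximalIdeal_eq_span_p, smod_span_iff] at this
end zp

section abs
variable {p : ℕ} [Fact p.Prime] {A : Type*} [CommRing A] [Algebra ℤ_[p] A]
  {ι : Type*} [Fintype ι] (b : Basis ι ℤ_[p] A)

theorem pdvd_iff (n : ℕ) (x : A) :
    (p : A) ^ n ∣ x ↔ ∃ y : A, x = (p : ℤ_[p]) ^ n • y := by
  have hp : (p : A) = algebraMap ℤ_[p] A (p : ℤ_[p]) := by simp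
  constructor
  · rintro ⟨y, rfl⟩
    exact ⟨y, by rw [hp, ← map_pow, ← Algebra.smul_def]⟩
  · rintro ⟨y, rfl⟩
    exact ⟨y, by rw [hp, ← map_pow, ← Algebra.smul_def]⟩

theorem coord_dvd_iff (n : ℕ) (x : A) :
    (p : A) ^ n ∣ x ↔ ∀ i, (p : ℤ_[p]) ^ n ∣ b.repr x i := by
  constructor
  · intro hx i
    obtain ⟨y, rfl⟩ := (pdvd_iff n x).1 hx
    rw [map_smul, Finsupp.smul_apply, smul_eq_mul]
    exact ⟨b.repr y i, rfl⟩
  · intro h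
    choose w hw using h
    refine (pdvd_iff n x).2 ⟨∑ i, w i • b i, ?_⟩
    rw [Finset.smul_sum]
    conv_lhs => rw [← b.sum_repr x]
    refine Finset.sum_congr rfl fun i _ => ?_
    rw [hw i, mul_smul]

include b in
theorem my_haus : IsHausdorff (Ideal.span {(p : A)}) A := by
    constructor
    intro x hx
    have h : ∀ n : ℕ, (p : A) ^ n ∣ x := fun n => by
      have := hx n
      rwa [smod_span_iff, sub_zero] at this
    have : ∀ i, b.repr x i = 0 := fun i =>
      zp_haus _ fun n => (coord_dvd_iff b n x).1 (h n) i
    have : b.repr x = 0 := Finsupp.ext this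
    simpa using b.repr.map_eq_zero_iff.1 this

include b in
theorem my_prec : IsPrecomplete (Ideal.span {(p : A)}) A := by
    constructor
    intro f hf
    have hco : ∀ i, ∃ L : ℤ_[p], ∀ n, (p : ℤ_[p]) ^ n ∣ b.repr (f n) i - L := by
      intro i
      refine zp_prec _ ?_
      intro m n hmn
      have := (smod_span_iff _ _ _ _).1 (hf hmn)
      have := (coord_dvd_iff b m (f m - f n)).1 this i
      rwa [map_sub, Finsupp.sub_apply] at this
    choose L hL using hco
    refine ⟨b.repr.symm (Finsupp.equivFunOnFinite.symm L), fun n => ?_⟩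
    rw [smod_span_iff, coord_dvd_iff b]
    intro i
    rw [map_sub, Finsupp.sub_apply, LinearEquiv.apply_symm_apply]
    simpa using hL i n

include b in
theorem my_adic_complete : IsAdicComplete (Ideal.span {(p : A)}) A :=
  { my_haus b, my_prec b with }

include b in
theorem my_finite_quotient : Finite (A ⧸ Ideal.span {(p : A)}) := by
  refine Finite.of_surjective
    (fun v : ι → ZMod p =>
      Ideal.Quotient.mk _ (∑ i, ((ZMod.cast (v i) : ℤ_[p])) • b i)) ?_
  intro x
  obtain ⟨x, rfl⟩ := Ideal.Quotient.mk_surjective x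
  refine ⟨fun i => PadicInt.toZMod (b.repr x i), ?_⟩
  rw [Ideal.Quotient.mk_eq_mk_iff_sub_mem]
  have : (p : A) ^ 1 ∣ (∑ i, ((ZMod.cast (PadicInt.toZMod (b.repr x i)) : ℤ_[p])) • b i) - x := by
    rw [coord_dvd_iff b]
    intro i
    rw [map_sub, Finsupp.sub_apply, pow_one]
    have hs : ∀ j, b.repr (∑ i, ((ZMod.cast (PadicInt.toZMod (b.repr x i)) : ℤ_[p])) • b i) j
        = (ZMod.cast (PadicInt.toZMod (b.repr x j)) : ℤ_[p]) := by
      intro j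
      classical
      rw [map_sum]
      simp [Basis.repr_self, Finsupp.single_apply, Finset.sum_ite_eq']
    rw [hs i]
    have := PadicInt.toZMod_spec (b.repr x i)
    rw [PadicInt.maximalIdeal_eq_span_p, Ideal.mem_span_singleton] at this
    have h2 := (dvd_neg (α := ℤ_[p])).2 this
    rwa [neg_sub] at h2
  rw [pow_one] at this
  exact Ideal.mem_span_singleton.2 this
end abs

theorem exists_pow_root {A : Type*} [CommRing A] (J : Ideal A) [HenselianRing A J]
    {ℓ : ℕ} (hℓ : ℓ ≠ 0) (hunit : IsUnit (Ideal.Quotient.mk J (ℓ : A)))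
    (g : A) (hg : g - 1 ∈ J) : ∃ a : A, a ^ ℓ = g := by
  obtain ⟨a, ha, -⟩ := HenselianRing.is_henselian (R := A) (I := J)
    (X ^ ℓ - C g) (monic_X_pow_sub_C g hℓ) 1
    (by simpa using J.neg_mem hg)
    (by
      have hder : (X ^ ℓ - C g : A[X]).derivative = C (ℓ : A) * X ^ (ℓ - 1) := by
        rw [derivative_sub, derivative_C, sub_zero, derivative_X_pow]
      rw [hder]
      simpa using hunit)
  refine ⟨a, ?_⟩
  have := ha
  simp only [IsRoot, eval_sub, eval_pow, eval_X, eval_C, sub_eq_zero] at this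
  exact this

theorem units_pow_surj {A : Type*} [CommRing A] (J : Ideal A)
    {ℓ N : ℕ} (hℓ : ℓ ≠ 0)
    (hN : ∀ w : (A ⧸ J)ˣ, w ^ (N : ℤ) = 1) (hcop : IsCoprime (ℓ : ℤ) (N : ℤ))
    (hroot : ∀ g : A, g - 1 ∈ J → ∃ a : A, a ^ ℓ = g)
    (u : Aˣ) : ∃ v : Aˣ, v ^ ℓ = u := by
  obtain ⟨x, y, hxy⟩ := hcop
  set g : Aˣ := u ^ ((N : ℤ) * y) with hg
  have hmk : Units.map (Ideal.Quotient.mk J).toMonoidHom g = 1 := by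
    rw [hg, map_zpow, mul_comm, zpow_mul]
    exact hN _
  have hgJ : (g : A) - 1 ∈ J := by
    have : (Ideal.Quotient.mk J) (g : A) = (Ideal.Quotient.mk J) 1 := by
      have := congrArg (Units.val) hmk
      simpa using this
    exact Ideal.Quotient.eq.1 this
  obtain ⟨a, ha⟩ := hroot g hgJ
  have haU : IsUnit a := by
    refine (isUnit_pow_iff hℓ).1 ?_
    rw [ha]; exact g.isUnit
  refine ⟨u ^ x * haU.unit, ?_⟩
  have hunit_pow : haU.unit ^ ℓ = g := by
    ext
    push_cast
    rw [haU.unit_spec, ha]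
  rw [mul_pow, hunit_pow, ← zpow_natCast (u ^ x) ℓ, ← zpow_mul, hg, ← zpow_add]
  rw [show x * (ℓ : ℤ) + (N : ℤ) * y = 1 from by linarith [hxy]]
  exact zpow_one u

theorem hom_trivial_of_pow_surj {G : Type*} [Group G] (ℓ : ℕ) (hℓ : 2 ≤ ℓ)
    (hsurj : ∀ u : G, ∃ v, v ^ ℓ = u) (f : G →* Multiplicative ℤ) : f = 1 := by
  have div : ∀ (k : ℕ) (u : G), ((ℓ : ℤ)) ^ k ∣ (f u).toAdd := by
    intro k
    induction k with
    | zero => intro u; simp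
    | succ k ih =>
      intro u
      obtain ⟨v, rfl⟩ := hsurj u
      rw [map_pow]
      have : (f v ^ ℓ).toAdd = (ℓ : ℤ) * (f v).toAdd := by
        simp [toAdd_pow, mul_comm]
      rw [this, pow_succ']
      exact mul_dvd_mul_left _ (ih v)
  ext u
  simp only [MonoidHom.one_apply]
  by_contra h
  have ht : (f u).toAdd ≠ 0 := fun h0 => h (by
    have : f u = Multiplicative.ofAdd 0 := by
      simpa using congrArg Multiplicative.ofAdd h0
    simpa using this)
  set t := (f u).toAdd with htdef
  set k := t.natAbs
  have h1 : (ℓ : ℤ) ^ k ∣ t := div k u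
  have h2 : (ℓ : ℤ) ^ k ≤ |t| := Int.le_of_dvd (abs_pos.2 ht) ((dvd_abs _ _).2 h1)
  have h3 : ((2 : ℤ)) ^ k ≤ (ℓ : ℤ) ^ k := by
    apply pow_le_pow_left₀ (by norm_num)
    exact_mod_cast hℓ
  have h4 : (k : ℤ) < 2 ^ k := by exact_mod_cast Nat.lt_two_pow_self (n := k)
  have h5 : |t| = (k : ℤ) := (Int.abs_eq_natAbs t)
  omega

section main
variable (p : ℕ) [Fact p.Prime] (K : Type*) [Field K] [Algebra ℚ_[p] K]
  [FiniteDimensional ℚ_[p] K] [Algebra ℤ_[p] K] [IsScalarTower ℤ_[p] ℚ_[p] K]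

theorem myNZSD : Module.IsTorsionFree ℤ_[p] K := by
  refine Module.isTorsionFree_iff_algebraMap_injective.2 ?_
  rw [IsScalarTower.algebraMap_eq ℤ_[p] ℚ_[p] K]
  exact (algebraMap ℚ_[p] K).injective.comp
    (fun a b h => Subtype.coe_injective (by simpa using h))

theorem myFin : Module.Finite ℤ_[p] (integralClosure ℤ_[p] K) := by
  have := myNZSD p K
  exact IsIntegralClosure.finite ℤ_[p] ℚ_[p] K (integralClosure ℤ_[p] K)

theorem myFree : Module.Free ℤ_[p] (integralClosure ℤ_[p] K) := by
  have := myNZSD p K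
  exact IsIntegralClosure.module_free ℤ_[p] ℚ_[p] K (integralClosure ℤ_[p] K)

end main

/-- Let `K` be a finite extension of `ℚ_p`, `O_K` the integral closure of `ℤ_p` in `K`,
and `U_K = O_Kˣ` its group of units.  Every group homomorphism from the multiplicative
group `U_K` to the additive group `ℤ` is trivial. -/
theorem hom_unitGroup_to_int_eq_one (p : ℕ) [Fact p.Prime]
    (K : Type*) [Field K] [Algebra ℚ_[p] K] [FiniteDimensional ℚ_[p] K]
    [Algebra ℤ_[p] K] [IsScalarTower ℤ_[p] ℚ_[p] K]
    (f : (integralClosure ℤ_[p] K)ˣ →* Multiplicative ℤ) :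
    f = 1 := by
  haveI := myFin p K
  haveI := myFree p K
  let b := Module.Free.chooseBasis ℤ_[p] (integralClosure ℤ_[p] K)
  let J : Ideal (integralClosure ℤ_[p] K) :=
    Ideal.span {((p : ℕ) : integralClosure ℤ_[p] K)}
  haveI : IsAdicComplete J (integralClosure ℤ_[p] K) := my_adic_complete b
  haveI hensel : HenselianRing (integralClosure ℤ_[p] K) J := inferInstance
  haveI : Finite ((integralClosure ℤ_[p] K) ⧸ J) := my_finite_quotient b
  let N := Nat.card ((integralClosure ℤ_[p] K) ⧸ J)ˣ
  have hNpos : 0 < N := Nat.card_pos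
  obtain ⟨ℓ, hle, hlp⟩ := Nat.exists_infinite_primes (max (p + 1) (N + 1))
  have hℓ0 : ℓ ≠ 0 := hlp.ne_zero
  have hℓ2 : 2 ≤ ℓ := hlp.two_le
  have hℓp : ℓ ≠ p := by
    have := le_trans (le_max_left (p+1) (N+1)) hle
    omega
  have hℓN : ¬ ℓ ∣ N := by
    intro hdvd
    have := Nat.le_of_dvd hNpos hdvd
    have := le_trans (le_max_right (p+1) (N+1)) hle
    omega
  have hcop : IsCoprime (ℓ : ℤ) (N : ℤ) :=
    Nat.isCoprime_iff_coprime.2 ((Nat.Prime.coprime_iff_not_dvd hlp).2 hℓN)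
  have hunit : IsUnit (Ideal.Quotient.mk J ((ℓ : ℕ) : integralClosure ℤ_[p] K)) := by
    have hcp : IsCoprime (ℓ : ℤ) (p : ℤ) :=
      Nat.isCoprime_iff_coprime.2 ((Nat.coprime_primes hlp (Fact.out)).2 hℓp)
    obtain ⟨c, d, hcd⟩ := hcp
    refine IsUnit.of_mul_eq_one ((c : (integralClosure ℤ_[p] K) ⧸ J)) ?_
    have hp0 : (((p : ℕ) : (integralClosure ℤ_[p] K) ⧸ J)) = 0 := by
      rw [← map_natCast (Ideal.Quotient.mk J) p, Ideal.Quotient.eq_zero_iff_mem]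
      exact Ideal.mem_span_singleton_self _
    have key : ((c * ℓ + d * p : ℤ) : (integralClosure ℤ_[p] K) ⧸ J) = 1 := by
      rw [hcd]; exact Int.cast_one
    push_cast at key
    rw [hp0, mul_zero, add_zero] at key
    rw [map_natCast (Ideal.Quotient.mk J) ℓ, mul_comm]
    exact key
  have hroot : ∀ g : integralClosure ℤ_[p] K, g - 1 ∈ J → ∃ a, a ^ ℓ = g :=
    fun g hg => exists_pow_root J hℓ0 hunit g hg
  have hNpow : ∀ w : ((integralClosure ℤ_[p] K) ⧸ J)ˣ, w ^ (N : ℤ) = 1 := fun w => by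
    rw [zpow_natCast]
    exact pow_card_eq_one'
  exact hom_trivial_of_pow_surj ℓ hℓ2
    (fun u => units_pow_surj J hℓ0 hNpow hcop hroot u) f
end

section
/- Let M be a finitely generated free abelian group and σ an automorphism of M, and let M^∨ = Hom(M, ℤ) with σ acting by (σ·f)(m) = f(σ⁻¹m). Then: (a) the map sending a homomorphism g : M_σ → ℤ to its composite with the projection M → M_σ is an isomorphism from Hom(M_σ, ℤ) onto the fixed points (M^∨)^σ = {f ∈ M^∨ : f∘σ = f}; and (b) the map (M^∨)_σ → Hom(M^σ, ℤ) induced by restricting homomorphisms f : M → ℤ to the fixed submodule M^σ is well defined and surjective, and its kernel is a finite group isomorphic to Ext¹_ℤ(M_σ, ℤ), equivalently to Hom((M_σ)_tors, ℚ/ℤ), where (M_σ)_tors is the torsion subgroup of M_σ. -/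
/-- The fixed-point subgroup `M^σ = ker (σ − 1)`, i.e. `H⁰(𝔴, M)`. -/
def fixedSub {M : Type*} [AddCommGroup M] (σ : M ≃+ M) : AddSubgroup M :=
  (σ.toAddMonoidHom - AddMonoidHom.id M).ker

/-- The subgroup `(σ − 1) M`, whose quotient is the coinvariants `M_σ = H¹(𝔴, M)`. -/
def coinvRange {M : Type*} [AddCommGroup M] (σ : M ≃+ M) : AddSubgroup M :=
  (σ.toAddMonoidHom - AddMonoidHom.id M).range

/-- The action of an automorphism `σ` of `M` on homomorphisms `M →+ A`,
given by `(σ · f) m = f (σ⁻¹ m)`. -/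
def dualAct {M : Type*} [AddCommGroup M] (A : Type*) [AddCommGroup A] (σ : M ≃+ M) :
    (M →+ A) ≃+ (M →+ A) where
  toFun f := f.comp σ.symm.toAddMonoidHom
  invFun f := f.comp σ.toAddMonoidHom
  left_inv f := by ext m; simp
  right_inv f := by ext m; simp
  map_add' f g := by ext m; simp

/-- Restriction of homomorphisms `M →+ ℤ` to the fixed-point subgroup `M^σ`. -/
def restrictHom {M : Type*} [AddCommGroup M] (σ : M ≃+ M) :
    (M →+ ℤ) →+ ((fixedSub σ) →+ ℤ) where
  toFun f := f.comp (fixedSub σ).subtype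
  map_zero' := rfl
  map_add' f g := rfl

section AuxLemmas

variable {M : Type*} [AddCommGroup M]

lemma mem_fixedSub_iff (σ : M ≃+ M) (m : M) : m ∈ fixedSub σ ↔ σ m = m := by
  simp [fixedSub, AddMonoidHom.mem_ker, sub_eq_zero]

lemma mem_coinvRange_iff (σ : M ≃+ M) (x : M) :
    x ∈ coinvRange σ ↔ ∃ m, σ m - m = x := by
  simp [coinvRange, AddMonoidHom.mem_range]

lemma dualAct_apply {A : Type*} [AddCommGroup A] (σ : M ≃+ M) (f : M →+ A) (m : M) :
    dualAct A σ f m = f (σ.symm m) := rfl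

/-- Characterization of the "coboundaries" on the dual side: `f` lies in
`(σ* − 1)(M^∨)` iff `f = h ∘ (σ − 1)` for some `h`. -/
lemma mem_coinvRange_dualAct_iff {A : Type*} [AddCommGroup A] (σ : M ≃+ M) (f : M →+ A) :
    f ∈ coinvRange (dualAct A σ) ↔ ∃ h : M →+ A, ∀ m, f m = h (σ m - m) := by
  constructor
  · rintro ⟨g, hg⟩
    refine ⟨-(g.comp σ.symm.toAddMonoidHom), fun m => ?_⟩
    have h1 := DFunLike.congr_fun hg m
    simp only [AddMonoidHom.sub_apply, AddMonoidHom.id_apply,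
      AddEquiv.toAddMonoidHom_eq_coe, AddMonoidHom.coe_coe] at h1
    rw [← h1]
    simp only [AddMonoidHom.neg_apply, AddMonoidHom.coe_comp, Function.comp_apply,
      AddEquiv.coe_toAddMonoidHom, dualAct_apply, map_sub, AddEquiv.symm_apply_apply]
    abel
  · rintro ⟨h, hh⟩
    refine ⟨-(h.comp σ.toAddMonoidHom), ?_⟩
    ext m
    show dualAct A σ (-(h.comp σ.toAddMonoidHom)) m - (-(h.comp σ.toAddMonoidHom)) m = f m
    rw [hh m]
    simp only [dualAct_apply, AddMonoidHom.neg_apply, AddMonoidHom.coe_comp,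
      Function.comp_apply, AddEquiv.coe_toAddMonoidHom, AddEquiv.apply_symm_apply, map_sub]
    abel

lemma zmod_hom_apply {n : ℕ} [NeZero n] {A : Type*} [AddCommGroup A]
    (φ : ZMod n →+ A) (x : ZMod n) : φ x = x.val • φ 1 := by
  conv_lhs => rw [show x = x.val • (1 : ZMod n) by
    rw [nsmul_eq_mul, mul_one]; exact (ZMod.natCast_rightInverse x).symm]
  rw [map_nsmul]

/-- The dual of `ZMod n` with values in `ℚ/ℤ` is (noncanonically) `ZMod n`. -/
lemma zmodDualEquiv (n : ℕ) (hn : n ≠ 0) :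
    Nonempty ((ZMod n →+ AddCircle (1 : ℚ)) ≃+ ZMod n) := by
  haveI : NeZero n := ⟨hn⟩
  have hnQ : (n : ℚ) ≠ 0 := Nat.cast_ne_zero.mpr hn
  let ι₀ : ℤ →+ AddCircle (1 : ℚ) :=
  { toFun := fun k => (((k : ℚ) / n : ℚ) : AddCircle (1 : ℚ))
    map_zero' := by norm_num
    map_add' := by
      intro a b
      push_cast
      rw [add_div]
      rfl }
  have hι₀ : ∀ k : ℤ, ι₀ k = (((k : ℚ) / n : ℚ) : AddCircle (1 : ℚ)) := fun _ => rfl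
  have h₁ : ι₀ n = 0 := by
    rw [hι₀]
    push_cast
    rw [div_self hnQ]
    exact AddCircle.coe_period 1
  let χ₁ : ZMod n →+ AddCircle (1 : ℚ) := ZMod.lift n ⟨ι₀, h₁⟩
  have hχ₁ : χ₁ 1 = (((n : ℚ)⁻¹ : ℚ) : AddCircle (1 : ℚ)) := by
    have : (1 : ZMod n) = ((1 : ℤ) : ZMod n) := by push_cast; rfl
    rw [this, ZMod.lift_coe]
    simp [hι₀, one_div]
  let β' : ℤ →+ (ZMod n →+ AddCircle (1 : ℚ)) := zmultiplesHom _ χ₁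
  have hβ' : β' (n : ℤ) = 0 := by
    ext x
    have : ((n : ℤ) • χ₁) x = χ₁ ((n : ℤ) • x) := (map_zsmul χ₁ _ _).symm
    rw [zmultiplesHom_apply, this]
    have hx : ((n : ℤ) • x) = 0 := by
      rw [zsmul_eq_mul]
      push_cast
      rw [ZMod.natCast_self, zero_mul]
    rw [hx, map_zero]
    rfl
  let β : ZMod n →+ (ZMod n →+ AddCircle (1 : ℚ)) := ZMod.lift n ⟨β', hβ'⟩
  have hβcoe : ∀ k : ℤ, β ((k : ℤ) : ZMod n) = k • χ₁ := fun k => by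
    rw [show β ((k : ℤ) : ZMod n) = β' k from ZMod.lift_coe n ⟨β', hβ'⟩ k]
    exact zmultiplesHom_apply _ _ _
  have hinj : Function.Injective β := by
    rw [injective_iff_map_eq_zero]
    intro x hx
    have hxcast : ((x.val : ℤ) : ZMod n) = x := by
      push_cast
      exact ZMod.natCast_rightInverse x
    rw [← hxcast] at hx
    rw [hβcoe] at hx
    have h1 : ((x.val : ℤ) • χ₁) 1 = 0 := by rw [hx]; rfl
    rw [AddMonoidHom.smul_apply, hχ₁, ← AddCircle.coe_zsmul] at h1
    obtain ⟨m, hm⟩ := (AddCircle.coe_eq_zero_iff _).mp h1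
    have hdvd : (n : ℤ) ∣ (x.val : ℤ) := by
      refine ⟨m, ?_⟩
      rw [zsmul_eq_mul, zsmul_eq_mul, mul_one] at hm
      have h2 : ((x.val : ℤ) : ℚ) = (n : ℚ) * m := by
        rw [hm]
        field_simp
      exact_mod_cast h2
    rw [← hxcast, ZMod.intCast_zmod_eq_zero_iff_dvd]
    exact hdvd
  have hsurj : Function.Surjective β := by
    intro χ
    obtain ⟨q, hq⟩ := QuotientAddGroup.mk_surjective (χ 1)
    have hnsmul : n • χ 1 = 0 := by
      rw [← map_nsmul]
      have h0 : n • (1 : ZMod n) = 0 := by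
        rw [nsmul_eq_mul, mul_one, ZMod.natCast_self]
      rw [h0, map_zero]
    have ht : ((n • q : ℚ) : AddCircle (1 : ℚ)) = 0 := by
      rw [AddCircle.coe_nsmul, hq]
      exact hnsmul
    obtain ⟨m, hm⟩ := (AddCircle.coe_eq_zero_iff _).mp ht
    have hq' : (m : ℚ) * (n : ℚ)⁻¹ = q := by
      rw [zsmul_eq_mul, mul_one, nsmul_eq_mul] at hm
      field_simp
      linarith
    have hmq : m • (χ₁ 1) = (q : AddCircle (1 : ℚ)) := by
      rw [hχ₁, ← AddCircle.coe_zsmul, zsmul_eq_mul, hq']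
    refine ⟨((m : ℤ) : ZMod n), ?_⟩
    ext x
    rw [hβcoe, AddMonoidHom.smul_apply, zmod_hom_apply χ x, zmod_hom_apply χ₁ x]
    rw [smul_comm, hmq, hq]
  exact ⟨(AddEquiv.ofBijective β ⟨hinj, hsurj⟩).symm⟩

end AuxLemmas

/-- Let `M` be a finitely generated free abelian group with automorphism `σ`, and
`M^∨ = Hom(M, ℤ)` with `(σ · f) m = f (σ⁻¹ m)`.  Then (a) `g ↦ g ∘ (M → M_σ)` is an
isomorphism `Hom(M_σ, ℤ) ≅ (M^∨)^σ`; and (b) the restriction map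
`(M^∨)_σ → Hom(M^σ, ℤ)` is well defined and surjective, with finite kernel isomorphic
to `Ext¹_ℤ(M_σ, ℤ) ≅ Hom((M_σ)_tors, ℚ/ℤ)`. -/
theorem fg_free_weil_duality_int (M : Type*) [AddCommGroup M] [Module.Free ℤ M]
    [Module.Finite ℤ M] (σ : M ≃+ M) :
    (∃ e : ((M ⧸ coinvRange σ) →+ ℤ) ≃+ fixedSub (dualAct ℤ σ),
      ∀ (g : (M ⧸ coinvRange σ) →+ ℤ) (m : M),
        ((e g : M →+ ℤ)) m = g (QuotientAddGroup.mk m)) ∧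
    (∀ f ∈ coinvRange (dualAct ℤ σ), restrictHom σ f = 0) ∧
    Function.Surjective (restrictHom σ) ∧
    Finite ((restrictHom σ).ker ⧸
      (coinvRange (dualAct ℤ σ)).addSubgroupOf (restrictHom σ).ker) ∧
    Nonempty (((restrictHom σ).ker ⧸
        (coinvRange (dualAct ℤ σ)).addSubgroupOf (restrictHom σ).ker) ≃+
      ((AddCommGroup.torsion (M ⧸ coinvRange σ)) →+ AddCircle (1 : ℚ))) := by
  classical
  -- Part (a)
  have memfix : ∀ g : (M ⧸ coinvRange σ) →+ ℤ,
      g.comp (QuotientAddGroup.mk' (coinvRange σ)) ∈ fixedSub (dualAct ℤ σ) := by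
    intro g
    rw [mem_fixedSub_iff]
    ext m
    rw [dualAct_apply]
    simp only [AddMonoidHom.coe_comp, Function.comp_apply, QuotientAddGroup.mk'_apply]
    congr 1
    rw [QuotientAddGroup.eq_iff_sub_mem]
    rw [mem_coinvRange_iff]
    exact ⟨-(σ.symm m), by simp [map_neg]; abel⟩
  have hvanish : ∀ f : fixedSub (dualAct ℤ σ), (coinvRange σ) ≤ (f : M →+ ℤ).ker := by
    rintro ⟨f, hf⟩ x hx
    obtain ⟨z, hz⟩ := (mem_coinvRange_iff σ x).mp hx
    have hfix : ∀ m, f (σ.symm m) = f m := by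
      intro m
      have := (mem_fixedSub_iff (dualAct ℤ σ) f).mp hf
      exact DFunLike.congr_fun this m
    have : f (σ z) = f z := by
      have h2 := hfix (σ z)
      simp only [AddEquiv.symm_apply_apply] at h2
      exact h2.symm
    simp only [AddMonoidHom.mem_ker]
    rw [← hz, map_sub, this, sub_self]
  have parta : ∃ e : ((M ⧸ coinvRange σ) →+ ℤ) ≃+ fixedSub (dualAct ℤ σ),
      ∀ (g : (M ⧸ coinvRange σ) →+ ℤ) (m : M),
        ((e g : M →+ ℤ)) m = g (QuotientAddGroup.mk m) := by
    refine ⟨{ toFun := fun g => ⟨g.comp (QuotientAddGroup.mk' (coinvRange σ)), memfix g⟩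
              invFun := fun f => QuotientAddGroup.lift (coinvRange σ) f.1 (hvanish f)
              left_inv := ?_
              right_inv := ?_
              map_add' := ?_ }, fun g m => rfl⟩
    · intro g
      ext m
      simp
    · rintro ⟨f, hf⟩
      apply Subtype.ext
      ext m
      simp
    · intro g g'
      apply Subtype.ext
      ext m
      simp
  -- Part (b1)
  have partb1 : ∀ f ∈ coinvRange (dualAct ℤ σ), restrictHom σ f = 0 := by
    intro f hf
    obtain ⟨h, hh⟩ := (mem_coinvRange_dualAct_iff σ f).mp hf
    ext ⟨m, hm⟩
    have hm' : σ m = m := (mem_fixedSub_iff σ m).mp hm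
    show f m = 0
    rw [hh m, hm', sub_self, map_zero]
  -- Part (b2)
  have partb2 : Function.Surjective (restrictHom σ) := by
    intro h
    haveI : NoZeroSMulDivisors ℤ M :=
      ⟨fun h => by have := (Module.free_iff_isTorsionFree (R := ℤ) (M := M)).mp inferInstance; simpa using h⟩
    set Ks : Submodule ℤ M := AddSubgroup.toIntSubmodule (fixedSub σ) with hKs
    haveI : NoZeroSMulDivisors ℤ (M ⧸ Ks) := by
      refine ⟨fun {c x} hcx => ?_⟩
      obtain ⟨m, rfl⟩ := Submodule.Quotient.mk_surjective Ks x
      rw [← Submodule.Quotient.mk_smul, Submodule.Quotient.mk_eq_zero] at hcx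
      by_cases hc : c = 0
      · exact Or.inl hc
      · right
        rw [Submodule.Quotient.mk_eq_zero]
        have h1 : σ (c • m) = c • m := (mem_fixedSub_iff σ _).mp hcx
        have h2 : c • (σ m - m) = 0 := by
          rw [smul_sub, ← map_zsmul σ c m, h1, sub_self]
        rcases smul_eq_zero.mp h2 with hc' | hm'
        · exact absurd hc' hc
        · show m ∈ fixedSub σ
          rw [mem_fixedSub_iff, ← sub_eq_zero]
          exact hm'
    haveI : Module.Free ℤ (M ⧸ Ks) := Module.free_of_finite_type_torsion_free'
    obtain ⟨s, hs⟩ := Module.projective_lifting_property Ks.mkQ LinearMap.id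
      (Submodule.mkQ_surjective Ks)
    set r : M →ₗ[ℤ] M := LinearMap.id - s ∘ₗ Ks.mkQ with hr
    have hrmem : ∀ m : M, r m ∈ fixedSub σ := by
      intro m
      have h0 : Ks.mkQ (r m) = 0 := by
        have h1 := DFunLike.congr_fun hs (Ks.mkQ m)
        simp only [LinearMap.coe_comp, Function.comp_apply, LinearMap.id_coe, id_eq,
          Submodule.mkQ_apply] at h1
        simp only [hr, LinearMap.sub_apply, map_sub, LinearMap.coe_comp, Function.comp_apply,
          LinearMap.id_coe, id_eq, Submodule.mkQ_apply, h1, sub_self]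
      show r m ∈ Ks
      rwa [← Submodule.Quotient.mk_eq_zero Ks]
    let ρ : M →+ (fixedSub σ) :=
    { toFun := fun m => ⟨r m, hrmem m⟩
      map_zero' := Subtype.ext (by simp)
      map_add' := fun x y => Subtype.ext (by simp) }
    refine ⟨h.comp ρ, ?_⟩
    ext ⟨m, hm⟩
    show h (ρ m) = h ⟨m, hm⟩
    congr 1
    apply Subtype.ext
    show r m = m
    have h0 : Ks.mkQ m = 0 := by
      rw [Submodule.mkQ_apply, Submodule.Quotient.mk_eq_zero]
      exact hm
    simp [hr, LinearMap.sub_apply, h0]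
  -- Part (b3): the kernel of the restriction map, modulo coboundaries
  obtain ⟨hfin, hiso⟩ :
      Finite ((restrictHom σ).ker ⧸
        (coinvRange (dualAct ℤ σ)).addSubgroupOf (restrictHom σ).ker) ∧
      Nonempty (((restrictHom σ).ker ⧸
          (coinvRange (dualAct ℤ σ)).addSubgroupOf (restrictHom σ).ker) ≃+
        ((AddCommGroup.torsion (M ⧸ coinvRange σ)) →+ AddCircle (1 : ℚ))) := by
    set Tl : M →ₗ[ℤ] M := (σ.toAddMonoidHom - AddMonoidHom.id M).toIntLinearMap with hTldef
    have hTlapp : ∀ m, Tl m = σ m - m := fun _ => rfl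
    set Isub : Submodule ℤ M := LinearMap.range Tl with hIsubdef
    have hIco : ∀ x, (x ∈ Isub ↔ x ∈ coinvRange σ) := by
      intro x
      rw [hIsubdef, LinearMap.mem_range, mem_coinvRange_iff]
      exact exists_congr (fun m => by rw [hTlapp])
    obtain ⟨k, snf⟩ := Submodule.smithNormalForm (Module.Free.chooseBasis ℤ M) Isub
    have ha : ∀ i, snf.a i ≠ 0 := by
      intro i hai
      have h1 := snf.snf i
      rw [hai, zero_smul] at h1
      exact snf.bN.ne_zero i (Subtype.ext (by rw [h1]; rfl))
    set nfun : Fin k → ℕ := fun i => (snf.a i).natAbs with hnfundef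
    have hnfun : ∀ i, nfun i ≠ 0 := fun i => Int.natAbs_ne_zero.mpr (ha i)
    haveI : ∀ i, NeZero (nfun i) := fun i => ⟨hnfun i⟩
    -- coordinates of elements of `Isub`
    have repr_dvd : ∀ x (hx : x ∈ Isub) i, snf.a i ∣ snf.bM.repr x (snf.f i) := by
      intro x hx i
      rw [snf.repr_apply_embedding_eq_repr_smul (⟨x, hx⟩ : Isub), map_smul,
        Finsupp.smul_apply, smul_eq_mul]
      exact ⟨_, rfl⟩
    have repr_zero : ∀ x (hx : x ∈ Isub) j, j ∉ Set.range snf.f → snf.bM.repr x j = 0 :=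
      fun x hx j hj => snf.repr_eq_zero_of_notMem_range (⟨x, hx⟩ : Isub) hj
    -- coordinates of sums of basis vectors indexed along the embedding
    have reprSum : ∀ (c : Fin k → ℤ) j, snf.bM.repr (∑ i, c i • snf.bM (snf.f i)) j
        = ∑ i, if snf.f i = j then c i else 0 := by
      intro c j
      rw [map_sum, Finsupp.finset_sum_apply]
      refine Finset.sum_congr rfl (fun i _ => ?_)
      rw [map_smul, Finsupp.smul_apply, Module.Basis.repr_self, Finsupp.single_apply, smul_eq_mul,
        mul_ite, mul_one, mul_zero]
    have reprSum_f : ∀ (c : Fin k → ℤ) i₀,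
        snf.bM.repr (∑ i, c i • snf.bM (snf.f i)) (snf.f i₀) = c i₀ := by
      intro c i₀
      rw [reprSum]
      simp only [snf.f.injective.eq_iff]
      simp [Finset.sum_ite_eq']
    have reprSum_nf : ∀ (c : Fin k → ℤ) j, j ∉ Set.range snf.f →
        snf.bM.repr (∑ i, c i • snf.bM (snf.f i)) j = 0 := by
      intro c j hj
      rw [reprSum]
      have : ∀ i, snf.f i ≠ j := by simpa [Set.mem_range] using hj
      simp [this]
    -- membership criterion for `Isub`
    have memIsub : ∀ x : M,
        (∀ j, j ∉ Set.range snf.f → snf.bM.repr x j = 0) →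
        (∀ i, snf.a i ∣ snf.bM.repr x (snf.f i)) → x ∈ Isub := by
      intro x h0 hdvd
      choose c hc using hdvd
      have hx : x = ∑ i, (c i * snf.a i) • snf.bM (snf.f i) := by
        apply snf.bM.repr.injective
        ext j
        by_cases hj : j ∈ Set.range snf.f
        · obtain ⟨i₀, rfl⟩ := hj
          rw [reprSum_f, hc i₀]
          ring
        · rw [reprSum_nf _ _ hj, h0 j hj]
      rw [hx]
      refine Submodule.sum_mem _ (fun i _ => ?_)
      rw [mul_smul]
      refine Submodule.smul_mem _ _ ?_
      have := (snf.bN i).2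
      rwa [show ((snf.bN i : M)) = snf.a i • snf.bM (snf.f i) from snf.snf i] at this
    -- preimages of the basis vectors of `Isub`
    have memT : ∀ m : M, Tl m ∈ Isub := fun m => LinearMap.mem_range.mpr ⟨m, rfl⟩
    choose y hy using fun i => LinearMap.mem_range.mp (snf.bN i).2
    have coesum : ∀ v : Isub, (∑ i, snf.bN.repr v i • ((snf.bN i : M))) = (v : M) := by
      intro v
      conv_rhs => rw [← snf.bN.sum_repr v]
      rw [Submodule.coe_sum]
      rfl
    have Tdecomp : ∀ m : M,
        Tl m = ∑ i, snf.bN.repr ⟨Tl m, memT m⟩ i • Tl (y i) := by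
      intro m
      simp_rw [hy]
      exact (coesum ⟨Tl m, memT m⟩).symm
    -- values of homomorphisms vanishing on the fixed subgroup
    have hker0 : ∀ (f : M →+ ℤ), restrictHom σ f = 0 → ∀ x, Tl x = 0 → f x = 0 := by
      intro f hf x hx
      have hmem : x ∈ fixedSub σ := by
        rw [mem_fixedSub_iff, ← sub_eq_zero]
        exact hx
      exact DFunLike.congr_fun hf (⟨x, hmem⟩ : fixedSub σ)
    have fval : ∀ (f : M →+ ℤ), restrictHom σ f = 0 → ∀ m : M,
        f m = ∑ i, snf.bN.repr ⟨Tl m, memT m⟩ i * f (y i) := by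
      intro f hf m
      have hTz : Tl (m - ∑ i, snf.bN.repr ⟨Tl m, memT m⟩ i • y i) = 0 := by
        rw [map_sub]
        rw [map_sum]
        simp_rw [map_smul]
        rw [← Tdecomp m, sub_self]
      have h0 : f (m - ∑ i, snf.bN.repr ⟨Tl m, memT m⟩ i • y i) = 0 := hker0 f hf _ hTz
      rw [map_sub, sub_eq_zero] at h0
      rw [h0, map_sum]
      refine Finset.sum_congr rfl (fun i _ => ?_)
      rw [AddMonoidHom.map_zsmul, smul_eq_mul]
    -- the homomorphism computing the finite invariants
    let ψ : ((restrictHom σ).ker) →+ (∀ i, ZMod (nfun i)) :=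
    { toFun := fun f => fun i => ((f.1 (y i) : ℤ) : ZMod (nfun i))
      map_zero' := by funext i; simp
      map_add' := by intro f g; funext i; simp [Int.cast_add] }
    have hker_iff : ∀ f : ((restrictHom σ).ker),
        (ψ f = 0 ↔ (f : M →+ ℤ) ∈ coinvRange (dualAct ℤ σ)) := by
      rintro ⟨f, hf⟩
      have hf0 : restrictHom σ f = 0 := hf
      constructor
      · intro hψ
        have hdvd : ∀ i, snf.a i ∣ f (y i) := by
          intro i
          have h1 := congrFun hψ i
          rw [Pi.zero_apply] at h1
          exact Int.natAbs_dvd.mp ((ZMod.intCast_zmod_eq_zero_iff_dvd _ _).mp h1)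
        choose d hd using hdvd
        rw [mem_coinvRange_dualAct_iff]
        refine ⟨(snf.bM.constr ℤ (Function.extend snf.f d 0)).toAddMonoidHom, fun m => ?_⟩
        show f m = (snf.bM.constr ℤ (Function.extend snf.f d 0)) (σ m - m)
        rw [show σ m - m = Tl m from rfl]
        have hrhs : (snf.bM.constr ℤ (Function.extend snf.f d 0)) (Tl m)
            = ∑ i, snf.bN.repr ⟨Tl m, memT m⟩ i * (snf.a i * d i) := by
          conv_lhs => rw [Tdecomp m]
          rw [map_sum]
          refine Finset.sum_congr rfl (fun i _ => ?_)
          rw [map_smul, hy i, show ((snf.bN i : M)) = snf.a i • snf.bM (snf.f i) from snf.snf i,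
            map_smul, Module.Basis.constr_basis, snf.f.injective.extend_apply d 0 i,
            smul_eq_mul, smul_eq_mul]
        rw [hrhs, fval f hf0 m]
        refine Finset.sum_congr rfl (fun i _ => ?_)
        rw [hd i]
      · intro hmem
        obtain ⟨h, hh⟩ := (mem_coinvRange_dualAct_iff σ f).mp hmem
        funext i
        show ((f (y i) : ℤ) : ZMod (nfun i)) = 0
        have hval : f (y i) = snf.a i * h (snf.bM (snf.f i)) := by
          rw [hh (y i), show σ (y i) - y i = Tl (y i) from rfl, hy i,
            show ((snf.bN i : M)) = snf.a i • snf.bM (snf.f i) from snf.snf i,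
            AddMonoidHom.map_zsmul, smul_eq_mul]
        rw [hval, ZMod.intCast_zmod_eq_zero_iff_dvd]
        exact Int.natAbs_dvd.mpr (dvd_mul_right _ _)
    have hψsurj : Function.Surjective ψ := by
      intro cv
      let g : Isub →ₗ[ℤ] ℤ := snf.bN.constr ℤ (fun i => ((cv i).val : ℤ))
      let fl : M →+ ℤ := (g ∘ₗ Tl.rangeRestrict).toAddMonoidHom
      have hfl : ∀ m, fl m = g (Tl.rangeRestrict m) := fun m => rfl
      have hflker : restrictHom σ fl = 0 := by
        ext ⟨x, hx⟩
        show fl x = 0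
        have hTx : Tl x = 0 := by
          have h1 : σ x = x := (mem_fixedSub_iff σ x).mp hx
          rw [hTlapp, h1, sub_self]
        have h2 : Tl.rangeRestrict x = 0 := Subtype.ext hTx
        rw [hfl, h2, map_zero]
      refine ⟨⟨fl, hflker⟩, ?_⟩
      funext i
      show ((fl (y i) : ℤ) : ZMod (nfun i)) = cv i
      have h1 : Tl.rangeRestrict (y i) = snf.bN i := Subtype.ext (hy i)
      rw [hfl, h1]
      show (((snf.bN.constr ℤ (fun i => ((cv i).val : ℤ))) (snf.bN i) : ℤ) : ZMod (nfun i)) = cv i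
      rw [Module.Basis.constr_basis]
      push_cast
      exact ZMod.natCast_rightInverse (cv i)
    have hkereq : ψ.ker = (coinvRange (dualAct ℤ σ)).addSubgroupOf (restrictHom σ).ker := by
      ext f
      rw [AddMonoidHom.mem_ker, AddSubgroup.mem_addSubgroupOf]
      exact hker_iff f
    let e₁ : ((restrictHom σ).ker ⧸
        (coinvRange (dualAct ℤ σ)).addSubgroupOf (restrictHom σ).ker) ≃+ (∀ i, ZMod (nfun i)) :=
      (QuotientAddGroup.quotientAddEquivOfEq hkereq.symm).trans
        (QuotientAddGroup.quotientKerEquivOfSurjective ψ hψsurj)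
    have hfin : Finite ((restrictHom σ).ker ⧸
        (coinvRange (dualAct ℤ σ)).addSubgroupOf (restrictHom σ).ker) :=
      Finite.of_equiv _ e₁.symm.toEquiv
    -- the torsion subgroup of the coinvariants
    let t : M →+ ∀ i, ZMod (nfun i) :=
    { toFun := fun m i => ((snf.bM.repr m (snf.f i) : ℤ) : ZMod (nfun i))
      map_zero' := by
        funext i
        show ((snf.bM.repr 0 (snf.f i) : ℤ) : ZMod (nfun i)) = 0
        simp
      map_add' := by
        intro x y
        funext i
        show ((snf.bM.repr (x + y) (snf.f i) : ℤ) : ZMod (nfun i))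
            = ((snf.bM.repr x (snf.f i) : ℤ) : ZMod (nfun i))
              + ((snf.bM.repr y (snf.f i) : ℤ) : ZMod (nfun i))
        rw [map_add, Finsupp.add_apply, Int.cast_add] }
    have ht0 : coinvRange σ ≤ t.ker := by
      intro x hx
      rw [AddMonoidHom.mem_ker]
      funext i
      show ((snf.bM.repr x (snf.f i) : ℤ) : ZMod (nfun i)) = 0
      rw [ZMod.intCast_zmod_eq_zero_iff_dvd]
      exact Int.natAbs_dvd.mpr (repr_dvd x ((hIco x).mpr hx) i)
    let tbar : (M ⧸ coinvRange σ) →+ ∀ i, ZMod (nfun i) :=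
      QuotientAddGroup.lift (coinvRange σ) t ht0
    let τ : (AddCommGroup.torsion (M ⧸ coinvRange σ)) →+ (∀ i, ZMod (nfun i)) :=
      tbar.comp (AddSubgroup.subtype _)
    have hτ_bij : Function.Bijective τ := by
      constructor
      · rw [injective_iff_map_eq_zero]
        rintro ⟨x, hxtors⟩ hτx
        obtain ⟨m, rfl⟩ := QuotientAddGroup.mk_surjective x
        have h1 : t m = 0 := hτx
        have htm : ∀ i, snf.a i ∣ snf.bM.repr m (snf.f i) := by
          intro i
          have h2 := congrFun h1 i
          rw [Pi.zero_apply] at h2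
          exact Int.natAbs_dvd.mp ((ZMod.intCast_zmod_eq_zero_iff_dvd _ _).mp h2)
        obtain ⟨N, hNpos, hN⟩ := isOfFinAddOrder_iff_nsmul_eq_zero.mp hxtors
        have hNm : (N • m : M) ∈ Isub := by
          rw [hIco]
          have h4 : (QuotientAddGroup.mk (N • m) : M ⧸ coinvRange σ) = 0 := by
            rw [← hN]
            exact map_nsmul (QuotientAddGroup.mk' (coinvRange σ)) N m
          exact (QuotientAddGroup.eq_zero_iff (N • m)).mp h4
        have hzero : ∀ j, j ∉ Set.range snf.f → snf.bM.repr m j = 0 := by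
          intro j hj
          have h3 := repr_zero _ hNm j hj
          rw [map_nsmul, Finsupp.smul_apply, nsmul_eq_mul] at h3
          have hN0 : (N : ℤ) ≠ 0 := Int.natCast_ne_zero.mpr hNpos.ne'
          exact (mul_eq_zero.mp h3).resolve_left hN0
        apply Subtype.ext
        show QuotientAddGroup.mk m = 0
        rw [QuotientAddGroup.eq_zero_iff]
        rw [← hIco]
        exact memIsub m hzero htm
      · intro cv
        set m : M := ∑ i, ((cv i).val : ℤ) • snf.bM (snf.f i) with hmdef
        have htors : (QuotientAddGroup.mk m : M ⧸ coinvRange σ) ∈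
            AddCommGroup.torsion (M ⧸ coinvRange σ) := by
          show IsOfFinAddOrder _
          rw [isOfFinAddOrder_iff_nsmul_eq_zero]
          refine ⟨∏ i, nfun i, Nat.pos_of_ne_zero (Finset.prod_ne_zero_iff.mpr
            (fun i _ => hnfun i)), ?_⟩
          have h5 : ((∏ i, nfun i) • (QuotientAddGroup.mk m : M ⧸ coinvRange σ))
              = QuotientAddGroup.mk ((∏ i, nfun i) • m) :=
            (map_nsmul (QuotientAddGroup.mk' (coinvRange σ)) _ m).symm
          rw [h5, QuotientAddGroup.eq_zero_iff, ← hIco]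
          refine memIsub _ ?_ ?_
          · intro j hj
            rw [map_nsmul, Finsupp.smul_apply, reprSum_nf _ _ hj, smul_zero]
          · intro i
            rw [map_nsmul, Finsupp.smul_apply, reprSum_f, nsmul_eq_mul]
            refine Dvd.dvd.mul_right ?_ _
            have hd1 : (nfun i : ℤ) ∣ ((∏ j, nfun j : ℕ) : ℤ) :=
              Int.natCast_dvd_natCast.mpr (Finset.dvd_prod_of_mem nfun (Finset.mem_univ i))
            exact Int.natAbs_dvd.mp hd1
        refine ⟨⟨QuotientAddGroup.mk m, htors⟩, ?_⟩
        funext i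
        show ((snf.bM.repr m (snf.f i) : ℤ) : ZMod (nfun i)) = cv i
        rw [hmdef, reprSum_f]
        push_cast
        exact ZMod.natCast_rightInverse (cv i)
    let τe : (AddCommGroup.torsion (M ⧸ coinvRange σ)) ≃+ (∀ i, ZMod (nfun i)) :=
      AddEquiv.ofBijective τ hτ_bij
    let D3e : ∀ i : Fin k, (ZMod (nfun i) →+ AddCircle (1 : ℚ)) ≃+ ZMod (nfun i) :=
      fun i => (zmodDualEquiv (nfun i) (hnfun i)).some
    let e₂ : ((AddCommGroup.torsion (M ⧸ coinvRange σ)) →+ AddCircle (1 : ℚ)) ≃+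
        (∀ i, ZMod (nfun i)) :=
      (AddEquiv.addMonoidHomCongrLeft τe).trans
        ((Pi.addMonoidHomAddEquiv _ _).trans (AddEquiv.piCongrRight D3e))
    exact ⟨hfin, ⟨e₁.trans e₂.symm⟩⟩
  exact ⟨parta, partb1, partb2, hfin, hiso⟩
end
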